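/- Let g : ℝᵐ → ℝ ∪ {+∞} be convex and lower semicontinuous, let F : ℝⁿ → ℝᵐ have continuously differentiable components, let x̄ ∈ ℝⁿ satisfy F(x̄) ∈ int(dom g), let Δ̄ > 0, let {F̃_Δ : Δ ∈ (0, Δ̄)} be fully linear models of F at x̄ with constants κ_F > 0 and κ_G > 0, and suppose F̃_Δ(x̄) = F(x̄) for all Δ ∈ (0, Δ̄). Let M = sup{‖w‖ : w ∈ ∂g(F(x̄))} (finite since F(x̄) ∈ int(dom g)). Then for every Δ ∈ (0, Δ̄) and every v ∈ ∇F(x̄)ᵀ ∂g(F(x̄)) there exists ṽ ∈ ∇F̃_Δ(x̄)ᵀ ∂g(F(x̄)) such that ‖v − ṽ‖ ≤ M √m κ_G Δ. (By the convex chain rule, ∇F(x̄)ᵀ ∂g(F(x̄)) = ∂(g∘F)(x̄) and ∇F̃_Δ(x̄)ᵀ ∂g(F(x̄)) = ∂(g∘F̃_Δ)(x̄).) -/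

import Mathlib

open Metric Set

/-- The (convex) subdifferential of an extended-real-valued function `g` at `z̄`:
`∂g(z̄) = {w : g(z) ≥ g(z̄) + ⟨w, z − z̄⟩ for all z}`. -/
def ERealSubdiff {m : ℕ} (g : EuclideanSpace ℝ (Fin m) → EReal)
    (zbar : EuclideanSpace ℝ (Fin m)) : Set (EuclideanSpace ℝ (Fin m)) :=
  {w | ∀ z, g zbar + ((inner ℝ w (z - zbar) : ℝ) : EReal) ≤ g z}

lemma subdiff_norm_bdd {m : ℕ} (g : EuclideanSpace ℝ (Fin m) → EReal)
    (hgbot : ∀ z, g z ≠ ⊥) (zbar : EuclideanSpace ℝ (Fin m))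
    (hdom : zbar ∈ interior {z | g z < ⊤}) :
    BddAbove ((fun w => ‖w‖) '' ERealSubdiff g zbar) := by
  obtain ⟨ε, hε, hball⟩ := Metric.mem_nhds_iff.1 (mem_interior_iff_mem_nhds.1 hdom)
  set r := ε / 2 with hrdef
  have hr0 : 0 < r := by positivity
  have hmem : ∀ u : EuclideanSpace ℝ (Fin m), ‖u‖ = r → g (zbar + u) < ⊤ := by
    intro u hu
    have : zbar + u ∈ ball zbar ε := by
      simp only [Metric.mem_ball, dist_eq_norm, add_sub_cancel_left, hu]
      linarith
    exact hball this
  have hzbar_lt : g zbar < ⊤ := by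
    have h : zbar ∈ {z | g z < ⊤} := interior_subset hdom
    exact h
  set a := (g zbar).toReal with hadef
  have hzbar : g zbar = (a : EReal) := (EReal.coe_toReal hzbar_lt.ne (hgbot zbar)).symm
  have key : ∀ z, g z < ⊤ → ∀ w ∈ ERealSubdiff g zbar,
      a + (inner ℝ w (z - zbar) : ℝ) ≤ (g z).toReal := by
    intro z hz w hw
    have h := hw z
    rw [hzbar, ← (EReal.coe_toReal hz.ne (hgbot z))] at h
    exact_mod_cast h
  have hsingle : ∀ i : Fin m, ‖(r • EuclideanSpace.single i (1:ℝ) : EuclideanSpace ℝ (Fin m))‖ = r := by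
    intro i
    rw [norm_smul, EuclideanSpace.norm_single]
    simp [abs_of_pos hr0]
  have hCub : ∀ i : Fin m, ∃ c : ℝ, ∀ w ∈ ERealSubdiff g zbar, |w i| ≤ c := by
    intro i
    refine ⟨max ((g (zbar + r • EuclideanSpace.single i 1)).toReal - a)
        ((g (zbar - r • EuclideanSpace.single i 1)).toReal - a) / r, ?_⟩
    intro w hw
    have hip : (inner ℝ w (r • EuclideanSpace.single i (1:ℝ)) : ℝ) = r * w i := by
      rw [real_inner_smul_right, EuclideanSpace.inner_single_right]
      simp
    have h1 : a + r * w i ≤ (g (zbar + r • EuclideanSpace.single i 1)).toReal := by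
      have := key (zbar + r • EuclideanSpace.single i 1)
        (hmem _ (hsingle i)) w hw
      rwa [add_sub_cancel_left, hip] at this
    have h2 : a + r * (- w i) ≤ (g (zbar - r • EuclideanSpace.single i 1)).toReal := by
      have hmem' : g (zbar - r • EuclideanSpace.single i 1) < ⊤ := by
        rw [sub_eq_add_neg]
        exact hmem _ (by rw [norm_neg]; exact hsingle i)
      have := key (zbar - r • EuclideanSpace.single i 1) hmem' w hw
      rw [sub_sub_cancel_left] at this
      rw [show (inner ℝ w (-(r • EuclideanSpace.single i (1:ℝ))) : ℝ) = -(r * w i) by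
        rw [inner_neg_right, hip]] at this
      linarith [this]
    rw [le_div_iff₀ hr0]
    rcases abs_cases (w i) with ⟨he, _⟩ | ⟨he, _⟩
    · rw [he]
      calc w i * r = r * w i := by ring
        _ ≤ (g (zbar + r • EuclideanSpace.single i 1)).toReal - a := by linarith
        _ ≤ _ := le_max_left _ _
    · rw [he]
      calc -(w i) * r = r * (-(w i)) := by ring
        _ ≤ (g (zbar - r • EuclideanSpace.single i 1)).toReal - a := by linarith
        _ ≤ _ := le_max_right _ _
  choose C hC using hCub
  refine ⟨Real.sqrt (∑ i, C i ^ 2), ?_⟩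
  rintro x ⟨w, hw, rfl⟩
  show ‖w‖ ≤ Real.sqrt (∑ i, C i ^ 2)
  rw [EuclideanSpace.norm_eq]
  apply Real.sqrt_le_sqrt
  apply Finset.sum_le_sum
  intro i _
  rw [Real.norm_eq_abs]
  have h := hC i w hw
  calc |w i| ^ 2 = |w i| * |w i| := sq (|w i|)
    _ ≤ C i * C i := mul_le_mul h h (abs_nonneg _) ((abs_nonneg _).trans h)
    _ = C i ^ 2 := (sq (C i)).symm

lemma sum_abs_le_sqrt_mul_norm {m : ℕ} (w : EuclideanSpace ℝ (Fin m)) :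
    ∑ i, |w i| ≤ Real.sqrt m * ‖w‖ := by
  set aa : EuclideanSpace ℝ (Fin m) := WithLp.toLp 2 (fun i => |w i|) with haa
  set bb : EuclideanSpace ℝ (Fin m) := WithLp.toLp 2 (fun _ => 1) with hbb
  have h := real_inner_le_norm (F := EuclideanSpace ℝ (Fin m)) aa bb
  have he : (inner ℝ aa bb : ℝ) = ∑ i, |w i| := by
    rw [PiLp.inner_apply]
    apply Finset.sum_congr rfl
    intro i _
    simp [haa, hbb]
  have h1 : ‖aa‖ = ‖w‖ := by
    rw [EuclideanSpace.norm_eq, EuclideanSpace.norm_eq]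
    congr 1
    apply Finset.sum_congr rfl
    intro i _
    simp [haa]
  have h2 : ‖bb‖ = Real.sqrt m := by
    rw [EuclideanSpace.norm_eq]
    simp [hbb]
  rw [he, h1, h2] at h
  linarith [h]

/-- **Subdifferential approximations** (Theorem 4.1, part 1). Under the assumptions that `g` is
convex lsc, `F(x̄) ∈ int(dom g)`, `F̃_Δ` are fully linear models of `F` at `x̄` with constants
`κF, κG`, and `F̃_Δ(x̄) = F(x̄)`, with `M = sup{‖w‖ : w ∈ ∂g(F(x̄))}`: for every `Δ ∈ (0, Δ̄)`
and every `v ∈ ∇F(x̄)ᵀ ∂g(F(x̄))` there exists `ṽ ∈ ∇F̃_Δ(x̄)ᵀ ∂g(F(x̄))` with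
`‖v − ṽ‖ ≤ M √m κG Δ`. -/
theorem subdifferential_approximation_fwd {n m : ℕ}
    (g : EuclideanSpace ℝ (Fin m) → EReal)
    (hgbot : ∀ z, g z ≠ ⊥)
    (hconv : Convex ℝ {p : EuclideanSpace ℝ (Fin m) × ℝ | g p.1 ≤ (p.2 : EReal)})
    (hlsc : IsClosed {p : EuclideanSpace ℝ (Fin m) × ℝ | g p.1 ≤ (p.2 : EReal)})
    (F : Fin m → EuclideanSpace ℝ (Fin n) → ℝ)
    (hF : ∀ i, ContDiff ℝ 1 (F i))
    (xbar : EuclideanSpace ℝ (Fin n))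
    (hdom : (WithLp.toLp 2 (fun i => F i xbar) : EuclideanSpace ℝ (Fin m)) ∈ interior {z | g z < ⊤})
    (Δbar κF κG : ℝ) (hΔbar : 0 < Δbar) (hκF : 0 < κF) (hκG : 0 < κG)
    (Ft : ℝ → Fin m → EuclideanSpace ℝ (Fin n) → ℝ)
    (hFtC1 : ∀ Δ ∈ Ioo (0:ℝ) Δbar, ∀ i, ContDiff ℝ 1 (Ft Δ i))
    (hfl : ∀ Δ ∈ Ioo (0:ℝ) Δbar, ∀ i, ∀ y ∈ ball xbar Δ,
      |F i y - Ft Δ i y| ≤ κF * Δ ^ 2 ∧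
      ‖gradient (F i) y - gradient (Ft Δ i) y‖ ≤ κG * Δ)
    (hcenter : ∀ Δ ∈ Ioo (0:ℝ) Δbar, ∀ i, Ft Δ i xbar = F i xbar)
    (M : ℝ)
    (hM : M = sSup ((fun w => ‖w‖) ''
      ERealSubdiff g (WithLp.toLp 2 (fun i => F i xbar) : EuclideanSpace ℝ (Fin m)))) :
    ∀ Δ ∈ Ioo (0:ℝ) Δbar,
      ∀ v ∈ (fun w : EuclideanSpace ℝ (Fin m) => ∑ i, w i • gradient (F i) xbar) ''
        ERealSubdiff g (WithLp.toLp 2 (fun i => F i xbar) : EuclideanSpace ℝ (Fin m)),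
      ∃ vt ∈ (fun w : EuclideanSpace ℝ (Fin m) => ∑ i, w i • gradient (Ft Δ i) xbar) ''
        ERealSubdiff g (WithLp.toLp 2 (fun i => F i xbar) : EuclideanSpace ℝ (Fin m)),
      ‖v - vt‖ ≤ M * Real.sqrt m * κG * Δ := by
  intro Δ hΔ v hv
  obtain ⟨w, hw, rfl⟩ := hv
  refine ⟨∑ i, w i • gradient (Ft Δ i) xbar, ⟨w, hw, rfl⟩, ?_⟩
  have hgrad : ∀ i, ‖gradient (F i) xbar - gradient (Ft Δ i) xbar‖ ≤ κG * Δ :=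
    fun i => (hfl Δ hΔ i xbar (mem_ball_self hΔ.1)).2
  have hwM : ‖w‖ ≤ M := by
    rw [hM]
    exact le_csSup (subdiff_norm_bdd g hgbot _ hdom) ⟨w, hw, rfl⟩
  have hκΔ : (0:ℝ) ≤ κG * Δ := mul_nonneg hκG.le hΔ.1.le
  have hsum : (∑ i, w i • gradient (F i) xbar) - ∑ i, w i • gradient (Ft Δ i) xbar
      = ∑ i, w i • (gradient (F i) xbar - gradient (Ft Δ i) xbar) := by
    rw [← Finset.sum_sub_distrib]
    apply Finset.sum_congr rfl
    intro i _
    rw [smul_sub]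
  rw [hsum]
  calc ‖∑ i, w i • (gradient (F i) xbar - gradient (Ft Δ i) xbar)‖
      ≤ ∑ i, ‖w i • (gradient (F i) xbar - gradient (Ft Δ i) xbar)‖ := norm_sum_le _ _
    _ ≤ ∑ i, |w i| * (κG * Δ) := by
        apply Finset.sum_le_sum
        intro i _
        rw [norm_smul, Real.norm_eq_abs]
        exact mul_le_mul_of_nonneg_left (hgrad i) (abs_nonneg _)
    _ = (∑ i, |w i|) * (κG * Δ) := by rw [Finset.sum_mul]
    _ ≤ (Real.sqrt m * ‖w‖) * (κG * Δ) :=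
        mul_le_mul_of_nonneg_right (sum_abs_le_sqrt_mul_norm w) hκΔ
    _ ≤ (Real.sqrt m * M) * (κG * Δ) := by
        apply mul_le_mul_of_nonneg_right _ hκΔ
        exact mul_le_mul_of_nonneg_left hwM (Real.sqrt_nonneg _)
    _ = M * Real.sqrt m * κG * Δ := by ring
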